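/- With O_f(n) = (1/n)Σ_{d|n} μ(n/d)(2^d-1)|2^d-1|_3, there exist constants c, C such that (1/2)log X + c ≤ Σ_{n ≤ X} O_f(n)/2^n ≤ log X + C for all X ≥ 2. -/

import Mathlib

open Finset

local instance : Fact (Nat.Prime 3) := ⟨by norm_num⟩

lemma eps_cast (d : ℕ) : (2:ℚ)^d - 1 = ((2^d - 1 : ℤ) : ℚ) := by push_cast; ring

lemma eps_nonneg (d : ℕ) : 0 ≤ padicNorm 3 ((2:ℚ)^d - 1) := padicNorm.nonneg _

lemma eps_le_one (d : ℕ) : padicNorm 3 ((2:ℚ)^d - 1) ≤ 1 := by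
  rw [eps_cast]; exact padicNorm.of_int _

lemma eps_odd {d : ℕ} (hd : Odd d) : padicNorm 3 ((2:ℚ)^d - 1) = 1 := by
  rw [eps_cast, padicNorm.int_eq_one_iff]
  intro h
  have h0 : ((2^d - 1 : ℤ) : ZMod 3) = 0 := by
    exact_mod_cast (ZMod.intCast_zmod_eq_zero_iff_dvd _ 3).mpr h
  push_cast at h0
  rw [show (2 : ZMod 3) = -1 by decide, hd.neg_one_pow] at h0
  exact absurd h0 (by decide)


lemma geomIccLe (m : ℕ) : ∑ d ∈ Icc 1 m, (2:ℚ)^d ≤ 2^(m+1) := by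
  have hsub : Icc 1 m ⊆ range (m+1) := by
    intro d hd; simp only [mem_Icc] at hd; simp [Nat.lt_succ_iff, hd.2]
  calc ∑ d ∈ Icc 1 m, (2:ℚ)^d ≤ ∑ d ∈ range (m+1), (2:ℚ)^d :=
        sum_le_sum_of_subset_of_nonneg hsub (fun i _ _ => by positivity)
    _ = (2^(m+1) - 1)/(2 - 1) := geom_sum_eq (by norm_num) _
    _ ≤ 2^(m+1) := by norm_num

lemma B_bound (n : ℕ) (hn : 1 ≤ n) :
    |(∑ d ∈ n.divisors, (ArithmeticFunction.moebius (n / d) : ℚ) *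
        (((2:ℚ)^d - 1) * padicNorm 3 ((2:ℚ)^d - 1)))
      - ((2:ℚ)^n - 1) * padicNorm 3 ((2:ℚ)^n - 1)| ≤ 2^(n/2 + 1) := by
  have hn0 : n ≠ 0 := by omega
  have hmem : n ∈ n.divisors := Nat.mem_divisors_self n hn0
  rw [← Finset.sum_erase_add _ _ hmem, Nat.div_self (by omega),
    ArithmeticFunction.moebius_apply_one]
  push_cast
  rw [one_mul, add_sub_cancel_right]
  calc |∑ d ∈ n.divisors.erase n, (ArithmeticFunction.moebius (n / d) : ℚ) *
        (((2:ℚ)^d - 1) * padicNorm 3 ((2:ℚ)^d - 1))|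
      ≤ ∑ d ∈ n.divisors.erase n, |(ArithmeticFunction.moebius (n / d) : ℚ) *
        (((2:ℚ)^d - 1) * padicNorm 3 ((2:ℚ)^d - 1))| := abs_sum_le_sum_abs _ _
    _ ≤ ∑ d ∈ n.divisors.erase n, (2:ℚ)^d := by
        refine sum_le_sum fun d hd => ?_
        have h1 : |(ArithmeticFunction.moebius (n / d) : ℚ)| ≤ 1 := by
          exact_mod_cast (by exact_mod_cast ArithmeticFunction.abs_moebius_le_one :
            (|ArithmeticFunction.moebius (n/d)| : ℚ) ≤ 1)
        have hε0 : 0 ≤ padicNorm 3 ((2:ℚ)^d - 1) := padicNorm.nonneg _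
        have hε1 : padicNorm 3 ((2:ℚ)^d - 1) ≤ 1 := by
          rw [show (2:ℚ)^d - 1 = ((2^d - 1 : ℤ) : ℚ) by push_cast; ring]
          exact padicNorm.of_int _
        have h2d : (0:ℚ) ≤ 2^d - 1 := by
          have : (1:ℚ) ≤ 2^d := one_le_pow₀ (by norm_num)
          linarith
        rw [abs_mul, abs_of_nonneg (mul_nonneg h2d hε0)]
        calc |(ArithmeticFunction.moebius (n / d) : ℚ)| * (((2:ℚ)^d - 1) *
              padicNorm 3 ((2:ℚ)^d - 1))
            ≤ 1 * (((2:ℚ)^d - 1) * padicNorm 3 ((2:ℚ)^d - 1)) :=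
              mul_le_mul_of_nonneg_right h1 (mul_nonneg h2d hε0)
          _ ≤ 2^d := by nlinarith
    _ ≤ ∑ d ∈ Icc 1 (n/2), (2:ℚ)^d := by
        refine sum_le_sum_of_subset_of_nonneg (fun d hd => ?_) (fun i _ _ => by positivity)
        rw [Finset.mem_erase, Nat.mem_divisors] at hd
        obtain ⟨hne, hdvd, -⟩ := hd
        have hd1 : 1 ≤ d := Nat.pos_of_dvd_of_pos hdvd (by omega)
        obtain ⟨k, hk⟩ := hdvd
        have hk2 : 2 ≤ k := by
          rcases Nat.lt_or_ge k 2 with h | h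
          · interval_cases k <;> omega
          · exact h
        have : d ≤ n/2 := Nat.le_div_iff_mul_le (by norm_num) |>.mpr (by nlinarith)
        simp [mem_Icc, hd1, this]
    _ ≤ 2^(n/2+1) := geomIccLe _


lemma pow_half_le (n : ℕ) : (2:ℝ)^(n/2) ≤ (3/2)^n := by
  refine le_of_pow_le_pow_left₀ (two_ne_zero) (by positivity) ?_
  calc ((2:ℝ)^(n/2))^2 = 2^(n/2*2) := by rw [← pow_mul]
    _ ≤ 2^n := pow_le_pow_right₀ (by norm_num) (by omega)
    _ ≤ ((3/2:ℝ)^2)^n := pow_le_pow_left₀ (by norm_num) (by norm_num) n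
    _ = ((3/2:ℝ)^n)^2 := by rw [← pow_mul, ← pow_mul, Nat.mul_comm]

lemma term_bounds (n : ℕ) (hn : 1 ≤ n)
    (B ε : ℝ) (habs : |B - ((2:ℝ)^n - 1) * ε| ≤ 2^(n/2 + 1))
    (_hε0 : 0 ≤ ε) (hε1 : ε ≤ 1) :
    ε/n - 3*(3/4)^n ≤ B/n/2^n ∧ B/n/2^n ≤ 1/n + 3*(3/4)^n := by
  have hn1 : (1:ℝ) ≤ n := by exact_mod_cast hn
  have hpos : (0:ℝ) < n * 2^n := by positivity
  have hpow := pow_half_le n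
  have h1 : (1:ℝ) ≤ (3/2)^n := one_le_pow₀ (by norm_num)
  have hmul : (3/4:ℝ)^n * 2^n = (3/2)^n := by rw [← mul_pow]; norm_num
  have habs' : |B - ((2:ℝ)^n - 1) * ε| ≤ 2 * (3/2)^n := by
    refine habs.trans ?_
    rw [pow_succ, mul_comm]
    gcongr
  rw [abs_le] at habs'
  rw [div_div]
  constructor
  · rw [le_div_iff₀ hpos]
    have h2 : (ε/n - 3*(3/4)^n) * (n * 2^n)
        = ε * 2^n * ((n:ℝ)⁻¹ * n) - 3 * n * ((3/4)^n * 2^n) := by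
      field_simp
    rw [h2, hmul, inv_mul_cancel₀ (by linarith), mul_one]
    have h2n : (1:ℝ) ≤ 2^n := one_le_pow₀ (by norm_num)
    nlinarith [habs'.1, mul_nonneg (sub_nonneg.mpr hn1) (le_trans zero_le_one h1)]
  · rw [div_le_iff₀ hpos]
    have h2 : (1/n + 3*(3/4)^n) * ((n:ℝ) * 2^n)
        = 2^n * ((n:ℝ)⁻¹ * n) + 3 * n * ((3/4)^n * 2^n) := by
      field_simp
    rw [h2, hmul, inv_mul_cancel₀ (by linarith), mul_one]
    have h2n : (1:ℝ) ≤ 2^n := one_le_pow₀ (by norm_num)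
    nlinarith [habs'.2, mul_le_mul_of_nonneg_left hε1 (by linarith : (0:ℝ) ≤ 2^n - 1),
      mul_nonneg (sub_nonneg.mpr hn1) (le_trans zero_le_one h1)]

lemma geomR (X : ℕ) : ∑ n ∈ Icc 1 X, (3/4:ℝ)^n ≤ 4 := by
  have hsub : Icc 1 X ⊆ range (X+1) := by
    intro d hd; simp only [mem_Icc] at hd; simp [Nat.lt_succ_iff, hd.2]
  calc ∑ n ∈ Icc 1 X, (3/4:ℝ)^n ≤ ∑ n ∈ range (X+1), (3/4:ℝ)^n :=
        sum_le_sum_of_subset_of_nonneg hsub (fun i _ _ => by positivity)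
    _ = ((3/4:ℝ)^(X+1) - 1)/(3/4 - 1) := geom_sum_eq (by norm_num) _
    _ ≤ 4 := by
        have h0 : (0:ℝ) ≤ (3/4:ℝ)^(X+1) := by positivity
        rw [div_le_iff_of_neg (by norm_num)]
        linarith

lemma harmR (X : ℕ) : ∑ n ∈ Icc 1 X, 1/(n:ℝ) = (harmonic X : ℝ) := by
  rw [harmonic_eq_sum_Icc]
  push_cast
  simp [one_div]

lemma sum_inv_le (X : ℕ) : ∑ n ∈ Icc 1 X, 1/(n:ℝ) ≤ 1 + Real.log X := by
  rw [harmR]; exact harmonic_le_one_add_log X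

lemma odd_lower (X : ℕ) (hX : 2 ≤ X) :
    (1/2) * Real.log X - Real.log 2 / 2 ≤
      ∑ n ∈ Icc 1 X, (padicNorm 3 ((2:ℚ)^n - 1) : ℝ)/n := by
  set m := X/2 with hm
  have hm1 : 1 ≤ m := by omega
  have key : ∑ k ∈ Icc 1 m, 1/(2*(k:ℝ)) ≤ ∑ n ∈ Icc 1 X, (padicNorm 3 ((2:ℚ)^n - 1) : ℝ)/n := by
    calc ∑ k ∈ Icc 1 m, 1/(2*(k:ℝ))
        ≤ ∑ k ∈ Icc 1 m, (padicNorm 3 ((2:ℚ)^(2*k-1) - 1) : ℝ)/((2*k-1 : ℕ) : ℝ) := by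
          refine sum_le_sum fun k hk => ?_
          have hk1 : 1 ≤ k := (mem_Icc.mp hk).1
          have hodd : Odd (2*k-1) := by
            refine ⟨k-1, by omega⟩
          rw [eps_odd hodd]
          push_cast
          have : ((2*k-1 : ℕ) : ℝ) ≤ 2*(k:ℝ) := by
            push_cast [Nat.cast_sub (by omega : 1 ≤ 2*k)]; linarith
          have hpos : (0:ℝ) < ((2*k-1:ℕ):ℝ) := by
            have : 1 ≤ 2*k-1 := by omega
            exact_mod_cast Nat.lt_of_lt_of_le Nat.zero_lt_one (by exact_mod_cast this)
          exact one_div_le_one_div_of_le hpos this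
      _ = ∑ n ∈ (Icc 1 m).image (fun k : ℕ => 2*k-1), (padicNorm 3 ((2:ℚ)^n - 1) : ℝ)/n := by
          rw [sum_image]
          intro a ha b hb hab
          have : 1 ≤ a := (mem_Icc.mp ha).1
          have : 1 ≤ b := (mem_Icc.mp hb).1
          beta_reduce at hab
          omega
      _ ≤ ∑ n ∈ Icc 1 X, (padicNorm 3 ((2:ℚ)^n - 1) : ℝ)/n := by
          refine sum_le_sum_of_subset_of_nonneg ?_ (fun i _ _ => ?_)
          · intro n hn
            simp only [mem_image, mem_Icc] at hn ⊢
            obtain ⟨k, ⟨hk1, hk2⟩, rfl⟩ := hn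
            constructor
            · omega
            · have h2m : 2*m ≤ X := Nat.mul_div_le X 2
              omega
          · have := eps_nonneg i
            positivity
  have hsum : ∑ k ∈ Icc 1 m, 1/(2*(k:ℝ)) = (1/2) * (harmonic m : ℝ) := by
    rw [← harmR, mul_sum]
    refine sum_congr rfl fun k _ => ?_
    field_simp
  have hlog : (1/2) * Real.log X - Real.log 2 / 2 ≤ (1/2) * (harmonic m : ℝ) := by
    have h1 : Real.log X - Real.log 2 = Real.log ((X:ℝ)/2) := by
      rw [Real.log_div (by positivity) (by norm_num)]
    have h2 : Real.log ((X:ℝ)/2) ≤ Real.log ((m:ℝ)+1) := by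
      apply Real.log_le_log (by positivity)
      have : (X:ℝ)/2 ≤ (m:ℝ) + 1 := by
        have : X < 2*(m+1) := by omega
        have := (by exact_mod_cast this : (X:ℝ) < 2*((m:ℝ)+1))
        linarith
      exact this
    have h3 : Real.log ((m:ℝ)+1) ≤ (harmonic m : ℝ) := by
      have := log_add_one_le_harmonic m
      push_cast at this ⊢
      exact this
    linarith
  linarith


theorem mertens_for_f :
    ∃ c C : ℝ, ∀ X : ℕ, 2 ≤ X →
      (1 / 2) * Real.log X + c ≤
        (∑ n ∈ Finset.Icc 1 X,
          (((1 / (n : ℚ)) * ∑ d ∈ n.divisors,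
            (ArithmeticFunction.moebius (n / d) : ℚ) *
              (((2 : ℚ) ^ d - 1) * padicNorm 3 ((2 : ℚ) ^ d - 1)) : ℚ) : ℝ) / 2 ^ n) ∧
      (∑ n ∈ Finset.Icc 1 X,
          (((1 / (n : ℚ)) * ∑ d ∈ n.divisors,
            (ArithmeticFunction.moebius (n / d) : ℚ) *
              (((2 : ℚ) ^ d - 1) * padicNorm 3 ((2 : ℚ) ^ d - 1)) : ℚ) : ℝ) / 2 ^ n) ≤
        Real.log X + C := by
  refine ⟨-(Real.log 2)/2 - 12, 13, fun X hX => ?_⟩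
  have hbounds : ∀ n ∈ Finset.Icc 1 X,
      ((padicNorm 3 ((2:ℚ)^n - 1) : ℝ)/n - 3*(3/4)^n ≤
        (((1 / (n : ℚ)) * ∑ d ∈ n.divisors,
            (ArithmeticFunction.moebius (n / d) : ℚ) *
              (((2 : ℚ) ^ d - 1) * padicNorm 3 ((2 : ℚ) ^ d - 1)) : ℚ) : ℝ) / 2 ^ n) ∧
      ((((1 / (n : ℚ)) * ∑ d ∈ n.divisors,
            (ArithmeticFunction.moebius (n / d) : ℚ) *
              (((2 : ℚ) ^ d - 1) * padicNorm 3 ((2 : ℚ) ^ d - 1)) : ℚ) : ℝ) / 2 ^ n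
          ≤ 1/(n:ℝ) + 3*(3/4)^n) := by
    intro n hn
    have hn1 : 1 ≤ n := (Finset.mem_Icc.mp hn).1
    set Bq : ℚ := ∑ d ∈ n.divisors,
      (ArithmeticFunction.moebius (n / d) : ℚ) *
        (((2 : ℚ) ^ d - 1) * padicNorm 3 ((2 : ℚ) ^ d - 1)) with hBq
    have habs : |(Bq : ℝ) - ((2:ℝ)^n - 1) * (padicNorm 3 ((2:ℚ)^n - 1) : ℝ)| ≤ 2^(n/2 + 1) := by
      have := B_bound n hn1
      rw [← hBq] at this
      have := (Rat.cast_le (K := ℝ)).mpr this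
      push_cast at this
      convert this using 2
    have hε0 : (0:ℝ) ≤ (padicNorm 3 ((2:ℚ)^n - 1) : ℝ) := by exact_mod_cast eps_nonneg n
    have hε1 : (padicNorm 3 ((2:ℚ)^n - 1) : ℝ) ≤ 1 := by exact_mod_cast eps_le_one n
    have hterm : (((1 / (n : ℚ)) * Bq : ℚ) : ℝ) / 2^n = (Bq:ℝ)/n/2^n := by
      push_cast; ring
    rw [hterm]
    exact term_bounds n hn1 (Bq:ℝ) _ habs hε0 hε1
  have hgeom := geomR X
  have hlow := odd_lower X hX
  have hup := sum_inv_le X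
  have hsumlow : ∑ n ∈ Finset.Icc 1 X, ((padicNorm 3 ((2:ℚ)^n - 1) : ℝ)/n - 3*(3/4)^n) ≤
      ∑ n ∈ Finset.Icc 1 X,
        (((1 / (n : ℚ)) * ∑ d ∈ n.divisors,
            (ArithmeticFunction.moebius (n / d) : ℚ) *
              (((2 : ℚ) ^ d - 1) * padicNorm 3 ((2 : ℚ) ^ d - 1)) : ℚ) : ℝ) / 2 ^ n :=
    Finset.sum_le_sum fun n hn => (hbounds n hn).1
  have hsumup : (∑ n ∈ Finset.Icc 1 X,
        (((1 / (n : ℚ)) * ∑ d ∈ n.divisors,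
            (ArithmeticFunction.moebius (n / d) : ℚ) *
              (((2 : ℚ) ^ d - 1) * padicNorm 3 ((2 : ℚ) ^ d - 1)) : ℚ) : ℝ) / 2 ^ n) ≤
      ∑ n ∈ Finset.Icc 1 X, (1/(n:ℝ) + 3*(3/4)^n) :=
    Finset.sum_le_sum fun n hn => (hbounds n hn).2
  rw [Finset.sum_sub_distrib] at hsumlow
  rw [Finset.sum_add_distrib] at hsumup
  rw [← Finset.mul_sum] at hsumlow hsumup
  constructor
  · calc (1/2) * Real.log X + (-(Real.log 2)/2 - 12)
        = ((1/2) * Real.log X - Real.log 2/2) - 12 := by ring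
      _ ≤ (∑ n ∈ Finset.Icc 1 X, (padicNorm 3 ((2:ℚ)^n - 1) : ℝ)/n) - 3 * ∑ n ∈ Finset.Icc 1 X, (3/4:ℝ)^n := by
          have : 3 * ∑ n ∈ Finset.Icc 1 X, (3/4:ℝ)^n ≤ 12 := by linarith
          linarith
      _ ≤ _ := hsumlow
  · refine hsumup.trans ?_
    have h30 : (0:ℝ) ≤ ∑ n ∈ Finset.Icc 1 X, (3/4:ℝ)^n :=
      Finset.sum_nonneg fun i _ => by positivity
    linarith
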